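/- Fix $\beta_0>\delta>0$ and a sequence $a_N\to\infty$ with $\liminf_{N\to\infty}\frac{1}{a_N}F_N'(\beta_0-\delta)>0$, where $F_N$ is the log-partition function of the Ising model. Then $\lim_{\varepsilon\to 0}\limsup_{N\to\infty}\frac{1}{a_N}\log\mathbb{P}_{\beta_0}(H_N(\sigma)<\varepsilon a_N)<0$; in particular $\lim_{\varepsilon\to 0}\limsup_{N\to\infty}\mathbb{P}_{\beta_0}(H_N(\sigma)<\varepsilon a_N)=0$. -/

import Mathlib

open Real Finset Filter

noncomputable def logPart {N : ℕ} (H : (Fin N → Bool) → ℝ) (β : ℝ) : ℝ :=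
  Real.log ((2 : ℝ)⁻¹ ^ N * ∑ τ : Fin N → Bool, Real.exp (β / 2 * H τ))

open Classical in
/-- `P_β(H(σ) < t)` for the model `P_β(σ=τ) ∝ e^{β H(τ)/2}` on `{-1,1}^N`. -/
noncomputable def probLT {N : ℕ} (H : (Fin N → Bool) → ℝ) (β t : ℝ) : ℝ :=
  (∑ τ ∈ Finset.univ.filter (fun τ : Fin N → Bool => H τ < t), Real.exp (β / 2 * H τ)) /
    ∑ τ : Fin N → Bool, Real.exp (β / 2 * H τ)

lemma Spos {N : ℕ} (H : (Fin N → Bool) → ℝ) (β : ℝ) :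
    0 < ∑ τ : Fin N → Bool, Real.exp (β / 2 * H τ) :=
  Finset.sum_pos (fun _ _ => Real.exp_pos _) Finset.univ_nonempty

lemma hasDerivAt_S {N : ℕ} (H : (Fin N → Bool) → ℝ) (β : ℝ) :
    HasDerivAt (fun b => ∑ τ : Fin N → Bool, Real.exp (b / 2 * H τ))
      (∑ τ : Fin N → Bool, H τ / 2 * Real.exp (β / 2 * H τ)) β := by
  apply HasDerivAt.fun_sum
  intro τ _
  have h0 : HasDerivAt (fun b : ℝ => b * (H τ / 2)) (H τ / 2) β := by
    simpa using (hasDerivAt_id β).mul_const (H τ / 2)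
  have h1 : HasDerivAt (fun b : ℝ => b / 2 * H τ) (H τ / 2) β :=
    (funext fun b => by ring : (fun b : ℝ => b * (H τ / 2)) = fun b : ℝ => b / 2 * H τ) ▸ h0
  simpa [mul_comm] using h1.exp

lemma deriv_logPart {N : ℕ} (H : (Fin N → Bool) → ℝ) (β : ℝ) :
    deriv (logPart H) β =
      (∑ τ : Fin N → Bool, H τ / 2 * Real.exp (β / 2 * H τ)) /
        (∑ τ : Fin N → Bool, Real.exp (β / 2 * H τ)) := by
  have hc : (0:ℝ) < (2 : ℝ)⁻¹ ^ N := by positivity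
  have hS := Spos H β
  have h : HasDerivAt (logPart H)
      (((2 : ℝ)⁻¹ ^ N * ∑ τ : Fin N → Bool, H τ / 2 * Real.exp (β / 2 * H τ)) /
        ((2 : ℝ)⁻¹ ^ N * ∑ τ : Fin N → Bool, Real.exp (β / 2 * H τ))) β :=
    (((hasDerivAt_S H β).const_mul ((2 : ℝ)⁻¹ ^ N))).log (by positivity)
  rw [h.deriv, mul_div_mul_left _ _ (ne_of_gt hc)]

lemma jensen_S {N : ℕ} (H : (Fin N → Bool) → ℝ) (β δ : ℝ) :
    (∑ τ : Fin N → Bool, Real.exp (β / 2 * H τ)) *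
      Real.exp (δ * ((∑ τ : Fin N → Bool, H τ / 2 * Real.exp (β / 2 * H τ)) /
        (∑ τ : Fin N → Bool, Real.exp (β / 2 * H τ))))
      ≤ ∑ τ : Fin N → Bool, Real.exp ((β + δ) / 2 * H τ) := by
  set S := ∑ τ : Fin N → Bool, Real.exp (β / 2 * H τ) with hSdef
  have hS : 0 < S := Spos H β
  have hw : ∀ τ ∈ (Finset.univ : Finset (Fin N → Bool)), 0 ≤ Real.exp (β / 2 * H τ) / S :=
    fun τ _ => by positivity
  have h1 : ∑ τ : Fin N → Bool, Real.exp (β / 2 * H τ) / S = 1 := by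
    rw [← Finset.sum_div, div_self (ne_of_gt hS)]
  have hmem : ∀ τ ∈ (Finset.univ : Finset (Fin N → Bool)),
      (δ / 2 * H τ) ∈ (Set.univ : Set ℝ) := fun _ _ => Set.mem_univ _
  have key : Real.exp (∑ τ : Fin N → Bool, (Real.exp (β / 2 * H τ) / S) • (δ / 2 * H τ))
      ≤ ∑ τ : Fin N → Bool, (Real.exp (β / 2 * H τ) / S) • Real.exp (δ / 2 * H τ) :=
    convexOn_exp.map_sum_le hw h1 hmem
  have e1 : ∑ τ : Fin N → Bool, (Real.exp (β / 2 * H τ) / S) • (δ / 2 * H τ)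
      = δ * ((∑ τ : Fin N → Bool, H τ / 2 * Real.exp (β / 2 * H τ)) / S) := by
    simp only [smul_eq_mul]
    rw [Finset.sum_div, Finset.mul_sum]
    exact Finset.sum_congr rfl fun τ _ => by ring
  have e2 : ∑ τ : Fin N → Bool, (Real.exp (β / 2 * H τ) / S) • Real.exp (δ / 2 * H τ)
      = (∑ τ : Fin N → Bool, Real.exp ((β + δ) / 2 * H τ)) / S := by
    rw [Finset.sum_div]
    refine Finset.sum_congr rfl fun τ _ => ?_
    rw [smul_eq_mul, div_mul_eq_mul_div, ← Real.exp_add]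
    ring_nf
  rw [e1, e2] at key
  calc S * Real.exp (δ * ((∑ τ : Fin N → Bool, H τ / 2 * Real.exp (β / 2 * H τ)) / S))
      ≤ S * ((∑ τ : Fin N → Bool, Real.exp ((β + δ) / 2 * H τ)) / S) := by
        exact mul_le_mul_of_nonneg_left key (le_of_lt hS)
    _ = ∑ τ : Fin N → Bool, Real.exp ((β + δ) / 2 * H τ) := by
        field_simp

open Classical in
lemma probLT_le {N : ℕ} (H : (Fin N → Bool) → ℝ) (β₀ δ t : ℝ) (hδ : 0 < δ) :
    probLT H β₀ t ≤ Real.exp (δ * t / 2 - δ * deriv (logPart H) (β₀ - δ)) := by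
  set D := deriv (logPart H) (β₀ - δ) with hD
  have hDval : D = (∑ τ : Fin N → Bool, H τ / 2 * Real.exp ((β₀ - δ) / 2 * H τ)) /
      (∑ τ : Fin N → Bool, Real.exp ((β₀ - δ) / 2 * H τ)) := deriv_logPart H (β₀ - δ)
  have hS0 : 0 < ∑ τ : Fin N → Bool, Real.exp (β₀ / 2 * H τ) := Spos H β₀
  have hSd : 0 < ∑ τ : Fin N → Bool, Real.exp ((β₀ - δ) / 2 * H τ) := Spos H (β₀ - δ)
  -- numerator bound
  have hnum : (∑ τ ∈ Finset.univ.filter (fun τ : Fin N → Bool => H τ < t),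
        Real.exp (β₀ / 2 * H τ))
      ≤ Real.exp (δ * t / 2) * ∑ τ : Fin N → Bool, Real.exp ((β₀ - δ) / 2 * H τ) := by
    rw [Finset.mul_sum]
    calc (∑ τ ∈ Finset.univ.filter (fun τ : Fin N → Bool => H τ < t), Real.exp (β₀ / 2 * H τ))
        ≤ ∑ τ ∈ Finset.univ.filter (fun τ : Fin N → Bool => H τ < t),
            Real.exp (δ * t / 2) * Real.exp ((β₀ - δ) / 2 * H τ) := by
          refine Finset.sum_le_sum fun τ hτ => ?_
          have ht : H τ < t := (Finset.mem_filter.mp hτ).2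
          rw [← Real.exp_add]
          apply Real.exp_le_exp.mpr
          nlinarith [ht, hδ]
      _ ≤ ∑ τ : Fin N → Bool, Real.exp (δ * t / 2) * Real.exp ((β₀ - δ) / 2 * H τ) :=
          Finset.sum_le_sum_of_subset_of_nonneg (Finset.filter_subset _ _)
            (fun τ _ _ => by positivity)
  -- denominator bound
  have hden : (∑ τ : Fin N → Bool, Real.exp ((β₀ - δ) / 2 * H τ)) * Real.exp (δ * D)
      ≤ ∑ τ : Fin N → Bool, Real.exp (β₀ / 2 * H τ) := by
    have := jensen_S H (β₀ - δ) δ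
    rw [← hDval] at this
    simpa using this
  have hexpD : 0 < Real.exp (δ * D) := Real.exp_pos _
  rw [probLT]
  rw [div_le_iff₀ hS0]
  calc (∑ τ ∈ Finset.univ.filter (fun τ : Fin N → Bool => H τ < t), Real.exp (β₀ / 2 * H τ))
      ≤ Real.exp (δ * t / 2) * ∑ τ : Fin N → Bool, Real.exp ((β₀ - δ) / 2 * H τ) := hnum
    _ = Real.exp (δ * t / 2 - δ * D) *
          ((∑ τ : Fin N → Bool, Real.exp ((β₀ - δ) / 2 * H τ)) * Real.exp (δ * D)) := by
        rw [Real.exp_sub]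
        field_simp
    _ ≤ Real.exp (δ * t / 2 - δ * D) * ∑ τ : Fin N → Bool, Real.exp (β₀ / 2 * H τ) :=
        mul_le_mul_of_nonneg_left hden (le_of_lt (Real.exp_pos _))

/-- Lower-tail bound: if `liminf F_N'(β₀-δ)/a_N > 0` then
`lim_{ε→0} limsup_N (1/a_N) log P_{β₀}(H_N < ε a_N) < 0` (expressed via exponential
bounds to avoid `log 0`), and in particular
`lim_{ε→0} limsup_N P_{β₀}(H_N < ε a_N) = 0`. -/
theorem stmt19 (H : (n : ℕ) → (Fin n → Bool) → ℝ) (a : ℕ → ℝ) (ha : ∀ n, 0 < a n)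
    (haTop : Tendsto a atTop atTop)
    (β₀ δ : ℝ) (hδ : 0 < δ) (hδβ : δ < β₀)
    (hliminf : ∃ c : ℝ, 0 < c ∧ ∀ᶠ n in atTop, c * a n ≤ deriv (logPart (H n)) (β₀ - δ)) :
    (∃ c : ℝ, c < 0 ∧ ∃ ε₀ : ℝ, 0 < ε₀ ∧ ∀ ε ∈ Set.Ioc (0 : ℝ) ε₀,
      ∀ᶠ n in atTop, probLT (H n) β₀ (ε * a n) ≤ Real.exp (c * a n)) ∧
    (∀ η : ℝ, 0 < η → ∃ ε₀ : ℝ, 0 < ε₀ ∧ ∀ ε ∈ Set.Ioc (0 : ℝ) ε₀,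
      ∀ᶠ n in atTop, probLT (H n) β₀ (ε * a n) ≤ η) := by
  obtain ⟨c, hc, hev⟩ := hliminf
  have hc' : -(δ * c / 2) < 0 := by nlinarith
  have main : ∀ ε ∈ Set.Ioc (0 : ℝ) c,
      ∀ᶠ n in atTop, probLT (H n) β₀ (ε * a n) ≤ Real.exp (-(δ * c / 2) * a n) := by
    intro ε hε
    filter_upwards [hev] with n hn
    have h1 := probLT_le (H n) β₀ δ (ε * a n) hδ
    refine h1.trans (Real.exp_le_exp.mpr ?_)
    have han := ha n
    have hεc := hε.2
    have hε0 := hε.1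
    nlinarith [hn, mul_le_mul_of_nonneg_right hεc (le_of_lt han)]
  constructor
  · exact ⟨-(δ * c / 2), hc', c, hc, main⟩
  · intro η hη
    refine ⟨c, hc, fun ε hε => ?_⟩
    have hsmall : ∀ᶠ n in atTop, Real.exp (-(δ * c / 2) * a n) ≤ η := by
      filter_upwards [haTop.eventually_ge_atTop (Real.log η / (-(δ * c / 2)))] with n hn
      have hne : (-(δ * c / 2)) ≠ 0 := ne_of_lt hc'
      have : -(δ * c / 2) * a n ≤ Real.log η := by
        calc -(δ * c / 2) * a n ≤ -(δ * c / 2) * (Real.log η / (-(δ * c / 2))) :=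
              mul_le_mul_of_nonpos_left hn (le_of_lt hc')
          _ = Real.log η := by field_simp
      exact (Real.exp_le_exp.mpr this).trans (Real.exp_log hη).le
    filter_upwards [main ε hε, hsmall] with n h1 h2 using h1.trans h2
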